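/- For the SICA model with positive parameters, if R₀ = (Λ/μ)·(N/D) < 1 where N = β[ξ₂(ξ₁ + ρη_A) + η_C φ ξ₁] and D = μ[ξ₂(ρ + ξ₁) + φξ₁ + ρd] + ρωd, with ξ₁ = α+μ+d, ξ₂ = ω+μ, then along any solution staying in the region {S+I+C+A ≤ Λ/μ, all components ≥ 0}, the function V = k₁ I + k₂ C + k₃ A with k₁ = ξ₁ξ₂ + ξ₁φη_C + ξ₂ρη_A, k₂ = ξ₁ω + ξ₁ξ₃η_C + ρη_Aω − η_Cρα, k₃ = αξ₂ + ξ₂ξ₃η_A + φη_Cα − φη_Aω (ξ₃ = ρ+φ+μ) has nonpositive orbital derivative, i.e. \dot V ≤ 0, with \dot V = 0 iff I = C = A = 0. -/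

import Mathlib

theorem sica_lyapunov_nonpos
    (Λ β ηC ηA μ ρ φ ω α d : ℝ)
    (hΛ : 0 < Λ) (hβ : 0 < β) (hηC : 0 < ηC) (hηA : 0 < ηA) (hμ : 0 < μ)
    (hρ : 0 < ρ) (hφ : 0 < φ) (hω : 0 < ω) (hα : 0 < α) (hd : 0 < d)
    -- abbreviations
    (ξ₁ ξ₂ ξ₃ N D k₁ k₂ k₃ : ℝ)
    (hξ₁ : ξ₁ = α + μ + d) (hξ₂ : ξ₂ = ω + μ) (hξ₃ : ξ₃ = ρ + φ + μ)
    (hN : N = β * (ξ₂ * (ξ₁ + ρ * ηA) + ηC * φ * ξ₁))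
    (hD : D = μ * (ξ₂ * (ρ + ξ₁) + φ * ξ₁ + ρ * d) + ρ * ω * d)
    (hk₁ : k₁ = ξ₁ * ξ₂ + ξ₁ * φ * ηC + ξ₂ * ρ * ηA)
    (hk₂ : k₂ = ξ₁ * ω + ξ₁ * ξ₃ * ηC + ρ * ηA * ω - ηC * ρ * α)
    (hk₃ : k₃ = α * ξ₂ + ξ₂ * ξ₃ * ηA + φ * ηC * α - φ * ηA * ω)
    -- basic reproduction number below one
    (hR0 : Λ / μ * (N / D) < 1)
    -- a state in the invariant region
    (S I C A : ℝ) (hS : 0 ≤ S) (hI : 0 ≤ I) (hC : 0 ≤ C) (hA : 0 ≤ A)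
    (hΩ : S + I + C + A ≤ Λ / μ)
    -- orbital derivative of V = k₁ I + k₂ C + k₃ A along the SICA vector field
    (Vdot : ℝ)
    (hVdot : Vdot = k₁ * (β * (I + ηC * C + ηA * A) * S - ξ₃ * I + ω * C + α * A)
                  + k₂ * (φ * I - ξ₂ * C) + k₃ * (ρ * I - ξ₁ * A)) :
    Vdot ≤ 0 ∧ (Vdot = 0 ↔ I = 0 ∧ C = 0 ∧ A = 0) := by
  subst hξ₁ hξ₂ hξ₃
  have hD0 : 0 < D := by rw [hD]; positivity
  have hN0 : 0 < N := by rw [hN]; positivity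
  have key : Vdot = (N * S - D) * (I + ηC * C + ηA * A) := by
    rw [hVdot, hk₁, hk₂, hk₃, hN, hD]; ring
  have hS' : S ≤ Λ / μ := by nlinarith
  have hR0' : Λ / μ * N < D := by
    have := mul_lt_mul_of_pos_right hR0 hD0
    rw [one_mul] at this
    calc Λ / μ * N = Λ / μ * (N / D) * D := by field_simp
    _ < D := this
  have hfac : N * S - D < 0 := by
    have h1 : N * S ≤ Λ / μ * N := by
      rw [mul_comm (Λ / μ) N]; exact mul_le_mul_of_nonneg_left hS' hN0.le
    linarith
  have hCn : 0 ≤ ηC * C := mul_nonneg hηC.le hC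
  have hAn : 0 ≤ ηA * A := mul_nonneg hηA.le hA
  have hsum : 0 ≤ I + ηC * C + ηA * A := by linarith
  constructor
  · rw [key]; exact mul_nonpos_of_nonpos_of_nonneg hfac.le hsum
  · constructor
    · intro h0
      rw [key] at h0
      have hz : I + ηC * C + ηA * A = 0 := by
        rcases mul_eq_zero.mp h0 with h | h
        · exact absurd h hfac.ne
        · exact h
      have hI0 : I = 0 := by linarith
      have hC0 : C = 0 := by
        have : ηC * C = 0 := by linarith
        exact (mul_eq_zero.mp this).resolve_left hηC.ne' 
      have hA0 : A = 0 := by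
        have : ηA * A = 0 := by linarith
        exact (mul_eq_zero.mp this).resolve_left hηA.ne'
      exact ⟨hI0, hC0, hA0⟩
    · rintro ⟨rfl, rfl, rfl⟩
      rw [key]; ring
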